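/- arXiv:1604.07843 — 10 statements merged into one kernel-verified Lean document; each statement's English description precedes it below -/
import Mathlib

section
/- Let n ≥ 1 and r ≥ 1 be integers, and let d_1, …, d_r be integers with d_i ≥ 2 for every i. If the sum ∑_{k ∈ K_{n,r}} ∏_{i=1}^r C(d_i, k_i + 1) equals 0, then r ≤ n − 1. (This is the combinatorial content of Theorem 4.2: by the formula of Proposition 4.4 this sum is the geometric genus p_g of a homogeneous isolated complete intersection singularity of multidegree (d_1,…,d_r) and dimension n, and rationality means p_g = 0.) -/
/-- If `n ≥ 1`, `r ≥ 1`, all `d i ≥ 2`, and the sum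
`∑_{k ∈ K_{n,r}} ∏_i C(d i, k i + 1)` vanishes, then `r ≤ n - 1`. -/
theorem homogeneous_icis_rational_codim_bound (n r : ℕ) (hn : 1 ≤ n) (hr : 1 ≤ r)
    (d : Fin r → ℕ) (hd : ∀ i, 2 ≤ d i)
    (h : ∑ k ∈ Finset.Nat.antidiagonalTuple r n, ∏ i, Nat.choose (d i) (k i + 1) = 0) :
    r ≤ n - 1 := by
  by_contra hc
  have hnr : n ≤ r := by clear h; omega
  set k : Fin r → ℕ := fun i => if (i : ℕ) < n then 1 else 0 with hk
  have hmem : k ∈ Finset.Nat.antidiagonalTuple r n := by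
    clear h
    rw [Finset.Nat.mem_antidiagonalTuple]
    have h1 : ∑ i : Fin r, k i = ∑ i ∈ Finset.range r, (if i < n then 1 else 0) := by
      rw [Finset.sum_range fun i => if i < n then 1 else 0]
    have hfilter : (Finset.range r).filter (fun i => i < n) = Finset.range n := by
      ext x; simp; omega
    have h2 := Finset.sum_boole (R := ℕ) (fun i => i < n) (Finset.range r)
    rw [h1, h2, hfilter]
    simp
  have hpos : 0 < ∏ i, Nat.choose (d i) (k i + 1) := by
    clear h hmem
    apply Finset.prod_pos
    intro i _
    apply Nat.choose_pos
    have := hd i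
    by_cases hi : (i : ℕ) < n <;> simp [hk, hi] <;> omega
  have hz := (Finset.sum_eq_zero_iff.mp h) k hmem
  exact absurd hz hpos.ne'
end

section
/- Let w_1, …, w_5 be positive rational numbers and d_1, d_2 positive rational numbers, and assume that for each j ∈ {1,2} there exists i ∈ {1,…,5} with w_i ≤ d_j. Then ℓ(d_1 + d_2) − ℓ(d_1) − ℓ(d_2) = 0 if and only if w_1 + w_2 + w_3 + w_4 + w_5 > d_1 + d_2. (This is the combinatorial content of Lemma 5.2: by Theorem 5.1 the left-hand side is the geometric genus of a weighted homogeneous ICIS of type (w_1,…,w_5; d_1, d_2) in five variables, and the hypothesis that some w_i ≤ d_j holds because the defining polynomial of degree d_j is nonzero.) -/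
/-- `A(N)`: integer points with all coordinates at least 1 and weighted sum at most `N`. -/
def Aset (w : Fin 5 → ℚ) (N : ℚ) : Set (Fin 5 → ℤ) :=
  {a | (∀ i, 1 ≤ a i) ∧ ∑ i, (a i : ℚ) * w i ≤ N}

/-- `ℓ(N)`: the number of points of `A(N)`. -/
noncomputable def ellA (w : Fin 5 → ℚ) (N : ℚ) : ℕ := (Aset w N).ncard

lemma sumw_ge (w : Fin 5 → ℚ) (hw : ∀ i, 0 < w i) (a : Fin 5 → ℤ) (ha : ∀ i, 1 ≤ a i) :
    ∑ i, w i ≤ ∑ i, (a i : ℚ) * w i := by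
  apply Finset.sum_le_sum
  intro i _
  have h1 : (1 : ℚ) ≤ (a i : ℚ) := by exact_mod_cast ha i
  nlinarith [hw i]

lemma Aset_finite (w : Fin 5 → ℚ) (hw : ∀ i, 0 < w i) (N : ℚ) : (Aset w N).Finite := by
  apply Set.Finite.subset (Set.Finite.pi (fun i : Fin 5 => Set.finite_Icc (1:ℤ) ⌊N / w i⌋))
  intro a ha
  obtain ⟨h1, h2⟩ := ha
  intro i _
  refine ⟨h1 i, ?_⟩
  rw [Int.le_floor, le_div_iff₀ (hw i)]
  calc (a i : ℚ) * w i ≤ ∑ j, (a j : ℚ) * w j := by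
        apply Finset.single_le_sum (f := fun j => (a j : ℚ) * w j)
        · intro j _
          have h1j : (1:ℚ) ≤ (a j : ℚ) := by exact_mod_cast h1 j
          nlinarith [hw j]
        · exact Finset.mem_univ i
    _ ≤ N := h2

lemma sum_shift (w : Fin 5 → ℚ) (a : Fin 5 → ℤ) (i₀ : Fin 5) (K : ℤ) :
    ∑ i, ((a i + if i = i₀ then K else 0 : ℤ) : ℚ) * w i
      = (∑ i, (a i : ℚ) * w i) + (K : ℚ) * w i₀ := by
  have h : ∀ i ∈ Finset.univ, ((a i + if i = i₀ then K else 0 : ℤ) : ℚ) * w i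
      = (a i : ℚ) * w i + (if i = i₀ then (K : ℚ) * w i else 0) := by
    intro i _
    by_cases hi : i = i₀ <;> simp [hi] <;> push_cast <;> ring
  rw [Finset.sum_congr rfl h, Finset.sum_add_distrib, Finset.sum_ite_eq']
  simp

lemma sum_onep (w : Fin 5 → ℚ) (i₀ : Fin 5) (t : ℤ) :
    ∑ i, (((fun j => 1 + if j = i₀ then t else 0 : Fin 5 → ℤ) i) : ℚ) * w i
      = (∑ i, w i) + (t : ℚ) * w i₀ := by
  have := sum_shift w (fun _ => 1) i₀ t
  simpa using this

lemma ell_strict (w : Fin 5 → ℚ) (d₁ d₂ : ℚ) (hw : ∀ i, 0 < w i)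
    (hd₁ : 0 < d₁) (hd₂ : 0 < d₂) (h₁ : ∃ i, w i ≤ d₁) (h₂ : ∃ i, w i ≤ d₂)
    (hle : ∑ i, w i ≤ d₁ + d₂) :
    ellA w d₁ + ellA w d₂ < ellA w (d₁ + d₂) := by
  have hfin : ∀ N, (Aset w N).Finite := Aset_finite w hw
  set W : ℚ := ∑ i, w i with hWdef
  obtain ⟨i₀, -, hmin⟩ := Finset.exists_min_image Finset.univ w ⟨0, Finset.mem_univ 0⟩
  set w₀ : ℚ := w i₀ with hw₀def
  have hw₀ : 0 < w₀ := hw i₀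
  have hw₀d₁ : w₀ ≤ d₁ := by
    obtain ⟨i, hi⟩ := h₁; exact le_trans (hmin i (Finset.mem_univ i)) hi
  have hw₀d₂ : w₀ ≤ d₂ := by
    obtain ⟨i, hi⟩ := h₂; exact le_trans (hmin i (Finset.mem_univ i)) hi
  have hW5 : 5 * w₀ ≤ W := by
    have : ∑ _i : Fin 5, w₀ ≤ ∑ i, w i :=
      Finset.sum_le_sum (fun i _ => hmin i (Finset.mem_univ i))
    simpa [Finset.sum_const, mul_comm] using this
  set K : ℤ := ⌊d₁ / w₀⌋ with hKdef
  have hK1 : 1 ≤ K := by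
    rw [hKdef, Int.le_floor]
    rw [le_div_iff₀ hw₀]
    simpa using hw₀d₁
  have hKle : (K : ℚ) * w₀ ≤ d₁ := by
    have := Int.floor_le (d₁ / w₀)
    rw [← hKdef] at this
    calc (K:ℚ) * w₀ ≤ (d₁ / w₀) * w₀ := by nlinarith
      _ = d₁ := by field_simp
  have hKgt : d₁ < ((K : ℚ) + 1) * w₀ := by
    have := Int.lt_floor_add_one (d₁ / w₀)
    rw [← hKdef] at this
    calc d₁ = (d₁ / w₀) * w₀ := by field_simp
      _ < ((K:ℚ) + 1) * w₀ := by nlinarith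
  set M : ℤ := ⌊(d₁ + d₂ - W) / w₀⌋ with hMdef
  have hM0 : 0 ≤ M := by
    rw [hMdef, Int.le_floor]
    push_cast
    exact div_nonneg (by linarith) hw₀.le
  have hMle : W + (M : ℚ) * w₀ ≤ d₁ + d₂ := by
    have := Int.floor_le ((d₁ + d₂ - W) / w₀)
    rw [← hMdef] at this
    have h2 : (M:ℚ) * w₀ ≤ d₁ + d₂ - W := by
      calc (M:ℚ) * w₀ ≤ ((d₁ + d₂ - W) / w₀) * w₀ := by nlinarith
        _ = d₁ + d₂ - W := by field_simp
    linarith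
  have hMgt : d₁ + d₂ < W + ((M : ℚ) + 1) * w₀ := by
    have := Int.lt_floor_add_one ((d₁ + d₂ - W) / w₀)
    rw [← hMdef] at this
    have h2 : d₁ + d₂ - W < ((M:ℚ) + 1) * w₀ := by
      calc d₁ + d₂ - W = ((d₁ + d₂ - W) / w₀) * w₀ := by field_simp
        _ < ((M:ℚ) + 1) * w₀ := by nlinarith
    linarith
  set φ : (Fin 5 → ℤ) → (Fin 5 → ℤ) := fun a j => a j + if j = i₀ then K else 0 with hφdef
  have hφinj : Function.Injective φ := by
    intro a b h
    funext j
    exact add_right_cancel (congrFun h j)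
  have hsumφ : ∀ a : Fin 5 → ℤ,
      ∑ i, ((φ a i : ℤ) : ℚ) * w i = (∑ i, (a i : ℚ) * w i) + (K : ℚ) * w₀ := by
    intro a
    exact sum_shift w a i₀ K
  have himg_sub : φ '' (Aset w d₂) ⊆ Aset w (d₁ + d₂) := by
    rintro _ ⟨a, ⟨ha1, ha2⟩, rfl⟩
    refine ⟨?_, ?_⟩
    · intro j
      have := ha1 j
      simp only [hφdef]
      split <;> omega
    · rw [hsumφ a]; linarith
  have himg_gt : ∀ x ∈ φ '' (Aset w d₂), d₁ < ∑ i, ((x i : ℤ) : ℚ) * w i := by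
    rintro _ ⟨a, ⟨ha1, ha2⟩, rfl⟩
    rw [hsumφ a]
    have hge : W ≤ ∑ i, (a i : ℚ) * w i := sumw_ge w hw a ha1
    nlinarith
  have hdisj : Disjoint (Aset w d₁) (φ '' (Aset w d₂)) := by
    rw [Set.disjoint_left]
    rintro x ⟨hx1, hx2⟩ hximg
    have := himg_gt x hximg
    linarith
  -- extra point
  obtain ⟨x, hxF, hx1, hx2⟩ : ∃ x, x ∈ Aset w (d₁ + d₂) ∧ x ∉ Aset w d₁ ∧
      x ∉ φ '' (Aset w d₂) := by
    set b : Fin 5 → ℤ := fun j => 1 + if j = i₀ then M else 0 with hbdef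
    by_cases hb : b ∈ φ '' (Aset w d₂)
    · -- collision case: use c = 1 + (K-1) e_{i₀}
      obtain ⟨a, ⟨ha1, ha2⟩, hab⟩ := hb
      have hai₀ : a i₀ = 1 + M - K := by
        have h0 := congrFun hab i₀
        simp [hφdef, hbdef] at h0
        omega
      have haj : ∀ j, j ≠ i₀ → a j = 1 := by
        intro j hj
        have h0 := congrFun hab j
        simp [hφdef, hbdef, hj] at h0
        omega
      have haeq : a = fun j => 1 + if j = i₀ then M - K else 0 := by
        funext j
        by_cases hj : j = i₀
        · subst hj; simp [hai₀]; omega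
        · simp [hj, haj j hj]
      have hKM : K ≤ M := by have := ha1 i₀; omega
      have hWd₂ : W + ((M : ℚ) - (K : ℚ)) * w₀ ≤ d₂ := by
        rw [haeq] at ha2
        have := sum_onep w i₀ (M - K)
        rw [this] at ha2
        push_cast at ha2 ⊢
        linarith
      have hWle : W ≤ d₂ := by
        have hMK : (0:ℚ) ≤ (M:ℚ) - (K:ℚ) := by
          have : (K:ℚ) ≤ (M:ℚ) := by exact_mod_cast hKM
          linarith
        nlinarith
      refine ⟨fun j => 1 + if j = i₀ then K - 1 else 0, ⟨?_, ?_⟩, ?_, ?_⟩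
      · intro j; dsimp only; split <;> omega
      · rw [sum_onep w i₀ (K - 1)]
        push_cast
        nlinarith
      · rintro ⟨-, hsum⟩
        rw [sum_onep w i₀ (K - 1)] at hsum
        push_cast at hsum
        nlinarith
      · rintro ⟨a', ⟨ha'1, -⟩, ha'⟩
        have h0 := congrFun ha' i₀
        simp [hφdef] at h0
        have h1 := ha'1 i₀
        omega
    · refine ⟨b, ⟨?_, ?_⟩, ?_, hb⟩
      · intro j; rw [hbdef]; dsimp only; split <;> omega
      · rw [hbdef, sum_onep w i₀ M]; linarith
      · rintro ⟨-, hsum⟩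
        rw [hbdef, sum_onep w i₀ M] at hsum
        nlinarith
  -- counting
  have hu : (Aset w d₁ ∪ φ '' (Aset w d₂)).ncard = ellA w d₁ + ellA w d₂ := by
    rw [Set.ncard_union_eq hdisj (hfin d₁) ((hfin d₂).image φ),
      Set.ncard_image_of_injective _ hφinj]
    rfl
  have hsub : insert x (Aset w d₁ ∪ φ '' (Aset w d₂)) ⊆ Aset w (d₁ + d₂) := by
    intro y hy
    rcases hy with rfl | hy
    · exact hxF
    rcases hy with hy | hy
    · obtain ⟨hy1, hy2⟩ := hy
      exact ⟨hy1, by linarith⟩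
    · exact himg_sub hy
  have hcard := Set.ncard_le_ncard hsub (hfin _)
  rw [Set.ncard_insert_of_notMem (by simp [hx1, hx2])
    ((hfin d₁).union ((hfin d₂).image φ)), hu] at hcard
  have : ellA w (d₁ + d₂) = (Aset w (d₁ + d₂)).ncard := rfl
  omega

/-- Lemma 5.2: with all `w i > 0`, `d₁, d₂ > 0`, and for each `j ∈ {1,2}`
some `w i ≤ d_j`, one has `ℓ(d₁+d₂) − ℓ(d₁) − ℓ(d₂) = 0` iff `∑ w i > d₁ + d₂`. -/
theorem rational_iff_weight_sum_gt (w : Fin 5 → ℚ) (d₁ d₂ : ℚ)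
    (hw : ∀ i, 0 < w i) (hd₁ : 0 < d₁) (hd₂ : 0 < d₂)
    (h₁ : ∃ i, w i ≤ d₁) (h₂ : ∃ i, w i ≤ d₂) :
    (ellA w (d₁ + d₂) : ℤ) - (ellA w d₁ : ℤ) - (ellA w d₂ : ℤ) = 0 ↔
      d₁ + d₂ < ∑ i, w i := by
  constructor
  · intro h
    by_contra hcon
    push_neg at hcon
    have := ell_strict w d₁ d₂ hw hd₁ hd₂ h₁ h₂ hcon
    omega
  · intro hlt
    have hempty : ∀ N : ℚ, N < ∑ i, w i → Aset w N = ∅ := by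
      intro N hN
      ext a
      simp only [Aset, Set.mem_setOf_eq, Set.mem_empty_iff_false, iff_false, not_and]
      intro h1
      have := sumw_ge w hw a h1
      intro h2
      linarith
    have e1 : ellA w (d₁ + d₂) = 0 := by
      rw [ellA, hempty _ hlt]; simp
    have e2 : ellA w d₁ = 0 := by
      rw [ellA, hempty _ (by linarith)]; simp
    have e3 : ellA w d₂ = 0 := by
      rw [ellA, hempty _ (by linarith)]; simp
    simp [e1, e2, e3]
end

section
/- Let w_1, …, w_5 be positive rational numbers and d_1, d_2 positive rational numbers. If A(d_1) is nonempty and there exists i ∈ {1,…,5} with w_i ≤ d_2, then ℓ(d_1 + d_2) ≥ ℓ(d_1) + ℓ(d_2) + 1. (This is the key intermediate inequality in the proof of Lemma 5.2: choosing a maximal element a_max of A(d_1), the translated set a_max + A(d_2) and the extra point a_max + e_i lie in A(d_1+d_2) but outside A(d_1), and are disjoint from each other.) -/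
lemma sum_add (w : Fin 5 → ℚ) (a b : Fin 5 → ℤ) :
    ∑ i, ((a + b) i : ℚ) * w i = (∑ i, (a i : ℚ) * w i) + ∑ i, (b i : ℚ) * w i := by
  rw [← Finset.sum_add_distrib]
  congr 1; funext i
  push_cast [Pi.add_apply]
  ring

/-- if `A(d₁)` is nonempty and some `w i ≤ d₂`, then
`ℓ(d₁+d₂) ≥ ℓ(d₁) + ℓ(d₂) + 1`. -/
theorem ell_add_strict_superadditive (w : Fin 5 → ℚ) (d₁ d₂ : ℚ)
    (hw : ∀ i, 0 < w i) (hd₁ : 0 < d₁) (hd₂ : 0 < d₂)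
    (hne : (Aset w d₁).Nonempty) (h₂ : ∃ i, w i ≤ d₂) :
    ellA w d₁ + ellA w d₂ + 1 ≤ ellA w (d₁ + d₂) := by
  obtain ⟨i, hi⟩ := h₂
  have hfin1 := Aset_finite w hw d₁
  have hfin2 := Aset_finite w hw d₂
  set S : (Fin 5 → ℤ) → ℚ := fun a => ∑ j, (a j : ℚ) * w j with hS
  -- a maximizer of S on Aset w d₁
  obtain ⟨m, hm, hmax⟩ := Set.exists_max_image _ S hfin1 hne
  -- the extra point m + e i
  set e : Fin 5 → ℤ := fun j => if j = i then 1 else 0 with he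
  have hSe : S e = w i := by
    simp only [hS, he]
    rw [Finset.sum_eq_single i]
    · simp
    · intro j _ hj; simp [hj]
    · simp
  -- generic: m + b with b ≥ (0 componentwise), S b > 0 is not in Aset w d₁
  have hnotin : ∀ b : Fin 5 → ℤ, (∀ j, 0 ≤ b j) → 0 < S b → m + b ∉ Aset w d₁ := by
    intro b hb hSb hmem
    have := hmax (m + b) hmem
    have hadd : S (m + b) = S m + S b := sum_add w m b
    linarith
  have hSpos : ∀ a ∈ Aset w d₂, 0 < S a := by
    intro a ha
    have : ∀ j, (0:ℚ) < (a j : ℚ) * w j := fun j =>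
      mul_pos (by exact_mod_cast lt_of_lt_of_le zero_lt_one (ha.1 j)) (hw j)
    exact Finset.sum_pos (fun j _ => this j) Finset.univ_nonempty
  -- translated set
  set T : Set (Fin 5 → ℤ) := (fun b => m + b) '' Aset w d₂ with hT
  have hTsub : T ⊆ Aset w (d₁ + d₂) := by
    rintro _ ⟨b, hb, rfl⟩
    refine ⟨fun j => ?_, ?_⟩
    · have h1 := hm.1 j; have h2 := hb.1 j
      show 1 ≤ m j + b j; omega
    · have hadd : S (m + b) = S m + S b := sum_add w m b
      show S (m + b) ≤ d₁ + d₂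
      rw [hadd]; exact add_le_add hm.2 hb.2
  have hTdisj : Disjoint (Aset w d₁) T := by
    rw [Set.disjoint_right]
    rintro _ ⟨b, hb, rfl⟩
    exact hnotin b (fun j => le_trans zero_le_one (by exact_mod_cast hb.1 j)) (hSpos b hb)
  -- the extra point
  have hpt_mem : m + e ∈ Aset w (d₁ + d₂) := by
    refine ⟨fun j => le_trans (hm.1 j) (by simp [he]; split <;> omega), ?_⟩
    have hadd : S (m + e) = S m + S e := sum_add w m e
    have := hm.2
    show S (m + e) ≤ d₁ + d₂
    rw [hadd, hSe]; linarith
  have hpt_not1 : m + e ∉ Aset w d₁ := by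
    apply hnotin e (fun j => by simp [he]; split <;> omega)
    rw [hSe]; exact hw i
  have hpt_notT : m + e ∉ T := by
    rintro ⟨b, hb, hbe⟩
    have : b = e := by
      funext j; have := congrFun hbe j; simpa [Pi.add_apply] using this
    subst this
    obtain ⟨j, hj⟩ : ∃ j : Fin 5, j ≠ i := by
      rcases eq_or_ne i 0 with h | h
      · exact ⟨1, by simp [h]⟩
      · exact ⟨0, fun hc => h hc.symm⟩
    have := hb.1 j
    simp [he, hj] at this
  -- cardinalities
  have hTfin : T.Finite := hfin2.image _
  have hTcard : T.ncard = (Aset w d₂).ncard :=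
    Set.ncard_image_of_injective _ (add_right_injective m)
  have hU : Aset w d₁ ∪ T ∪ {m + e} ⊆ Aset w (d₁ + d₂) := by
    apply Set.union_subset (Set.union_subset ?_ hTsub) (by simpa using hpt_mem)
    intro a ha
    exact ⟨ha.1, le_trans ha.2 (by linarith)⟩
  have card1 : (Aset w d₁ ∪ T).ncard = (Aset w d₁).ncard + T.ncard :=
    Set.ncard_union_eq hTdisj hfin1 hTfin
  have hdisj2 : Disjoint (Aset w d₁ ∪ T) {m + e} := by
    rw [Set.disjoint_singleton_right]
    rintro (h | h)
    · exact hpt_not1 h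
    · exact hpt_notT h
  have card2 : (Aset w d₁ ∪ T ∪ {m + e}).ncard
      = (Aset w d₁).ncard + T.ncard + 1 := by
    rw [Set.ncard_union_eq hdisj2 (hfin1.union hTfin) (Set.finite_singleton _), card1,
      Set.ncard_singleton]
  have hfin12 := Aset_finite w hw (d₁ + d₂)
  have := Set.ncard_le_ncard hU hfin12
  rw [card2, hTcard] at this
  simpa [ellA] using this
end

section
/- (Lemma 5.3, part (1).) Let f_1, f_2 ∈ ℂ[z_1,…,z_5] with f_1(0) = f_2(0) = 0, and suppose the variety X = {x ∈ ℂ^5 : f_1(x) = f_2(x) = 0} has an isolated singularity at the origin. Then for every i ∈ {1,2,3,4,5}, one of the following holds: (1a) z_i^n appears in f_1 for some n ≥ 1; (1b) z_i^n appears in f_2 for some n ≥ 1; (1c) there exist distinct j, k ∈ {1,2,3,4,5} \ {i} such that z_i^n z_j appears in f_1 for some n ≥ 0 and z_i^m z_k appears in f_2 for some m ≥ 0. -/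
open MvPolynomial

/-- The monomial with exponent vector `m` appears in `f`. -/
def Appears (f : MvPolynomial (Fin 5) ℂ) (m : Fin 5 →₀ ℕ) : Prop :=
  MvPolynomial.coeff m f ≠ 0

/-- `V(f₁, f₂)` has an isolated singularity at the origin: at every nonzero common zero,
some 2×2 minor of the Jacobian matrix is nonzero. -/
def IsolatedSingOrigin (f₁ f₂ : MvPolynomial (Fin 5) ℂ) : Prop :=
  ∀ x : Fin 5 → ℂ, x ≠ 0 → eval x f₁ = 0 → eval x f₂ = 0 →
    ∃ i j : Fin 5,
      eval x (pderiv i f₁) * eval x (pderiv j f₂) -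
        eval x (pderiv j f₁) * eval x (pderiv i f₂) ≠ 0

/-- Coefficient of a partial derivative. -/
lemma coeff_pderiv_aux (j : Fin 5) (m : Fin 5 →₀ ℕ) (f : MvPolynomial (Fin 5) ℂ) :
    coeff m (pderiv j f) = (m j + 1 : ℕ) * coeff (m + Finsupp.single j 1) f := by
  induction f using MvPolynomial.induction_on' with
  | monomial s a =>
    rw [pderiv_monomial, coeff_monomial, coeff_monomial]
    split_ifs with h1 h2 h2
    · have hsj : s j = m j + 1 := by
        rw [h2]; simp
      rw [hsj]; ring
    · -- s - single j 1 = m but s ≠ m + single j 1 : then s j = 0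
      have hsj : s j = 0 := by
        by_contra h
        have hle : Finsupp.single j 1 ≤ s := by
          rw [Finsupp.single_le_iff]
          omega
        have := tsub_add_cancel_of_le hle
        rw [h1] at this
        exact h2 this.symm
      simp [hsj]
    · exfalso
      apply h1
      rw [h2, add_tsub_cancel_right]
    · simp
  | add p q hp hq =>
    simp only [map_add, coeff_add, hp, hq]
    ring

/-- If no pure power of `z i` has nonzero coefficient in `g`, then `g` vanishes at the
point `e i`. -/
lemma eval_axis_eq_zero (i : Fin 5) (g : MvPolynomial (Fin 5) ℂ)
    (h : ∀ n : ℕ, coeff (Finsupp.single i n) g = 0) :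
    eval (fun j => if j = i then (1 : ℂ) else 0) g = 0 := by
  rw [eval_eq]
  apply Finset.sum_eq_zero
  intro d _
  by_cases hs : d.support ⊆ {i}
  · rw [Finsupp.support_subset_singleton.mp hs, h (d i), zero_mul]
  · rw [Finset.not_subset] at hs
    obtain ⟨j, hj, hji⟩ := hs
    rw [Finset.mem_singleton] at hji
    have : (∏ k ∈ d.support, (if k = i then (1 : ℂ) else 0) ^ d k) = 0 := by
      apply Finset.prod_eq_zero hj
      rw [if_neg hji]
      exact zero_pow (Finsupp.mem_support_iff.mp hj)
    rw [this, mul_zero]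

/-- If `g` does not vanish at `e i`, some pure power of `z i` has nonzero coefficient. -/
lemma exists_coeff_ne_zero (i : Fin 5) (g : MvPolynomial (Fin 5) ℂ)
    (h : eval (fun j => if j = i then (1 : ℂ) else 0) g ≠ 0) :
    ∃ n : ℕ, coeff (Finsupp.single i n) g ≠ 0 := by
  by_contra hc
  push_neg at hc
  exact h (eval_axis_eq_zero i g hc)

/-- Lemma 5.3 (1). -/
theorem icis_monomial_structure_one (f₁ f₂ : MvPolynomial (Fin 5) ℂ)
    (h₀₁ : eval (0 : Fin 5 → ℂ) f₁ = 0) (h₀₂ : eval (0 : Fin 5 → ℂ) f₂ = 0)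
    (hiso : IsolatedSingOrigin f₁ f₂) :
    ∀ i : Fin 5,
      (∃ n : ℕ, 1 ≤ n ∧ Appears f₁ (Finsupp.single i n)) ∨
      (∃ n : ℕ, 1 ≤ n ∧ Appears f₂ (Finsupp.single i n)) ∨
      (∃ j k : Fin 5, j ≠ i ∧ k ≠ i ∧ j ≠ k ∧
        (∃ n : ℕ, Appears f₁ (Finsupp.single i n + Finsupp.single j 1)) ∧
        (∃ m : ℕ, Appears f₂ (Finsupp.single i m + Finsupp.single k 1))) := by
  intro i
  by_cases H1 : ∃ n : ℕ, 1 ≤ n ∧ Appears f₁ (Finsupp.single i n)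
  · exact Or.inl H1
  by_cases H2 : ∃ n : ℕ, 1 ≤ n ∧ Appears f₂ (Finsupp.single i n)
  · exact Or.inr (Or.inl H2)
  right; right
  push_neg at H1 H2
  simp only [Appears, ne_eq, not_not] at H1 H2
  -- all pure-power coefficients vanish
  have hc₁ : ∀ n : ℕ, coeff (Finsupp.single i n) f₁ = 0 := by
    intro n
    rcases Nat.eq_zero_or_pos n with hn | hn
    · subst hn
      rw [Finsupp.single_zero, ← constantCoeff_eq, ← eval_zero]
      exact h₀₁
    · exact H1 n hn
  have hc₂ : ∀ n : ℕ, coeff (Finsupp.single i n) f₂ = 0 := by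
    intro n
    rcases Nat.eq_zero_or_pos n with hn | hn
    · subst hn
      rw [Finsupp.single_zero, ← constantCoeff_eq, ← eval_zero]
      exact h₀₂
    · exact H2 n hn
  -- the point e_i
  set x : Fin 5 → ℂ := fun j => if j = i then (1 : ℂ) else 0 with hx
  have hxne : x ≠ 0 := by
    intro h
    have := congrFun h i
    simp [hx] at this
  have hxf₁ : eval x f₁ = 0 := eval_axis_eq_zero i f₁ hc₁
  have hxf₂ : eval x f₂ = 0 := eval_axis_eq_zero i f₂ hc₂
  -- i-th partials vanish at x
  have hpi₁ : eval x (pderiv i f₁) = 0 := by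
    apply eval_axis_eq_zero
    intro n
    rw [coeff_pderiv_aux]
    have : Finsupp.single i n + Finsupp.single i 1 = Finsupp.single i (n + 1) := by
      rw [← Finsupp.single_add]
    rw [this, hc₁, mul_zero]
  have hpi₂ : eval x (pderiv i f₂) = 0 := by
    apply eval_axis_eq_zero
    intro n
    rw [coeff_pderiv_aux]
    have : Finsupp.single i n + Finsupp.single i 1 = Finsupp.single i (n + 1) := by
      rw [← Finsupp.single_add]
    rw [this, hc₂, mul_zero]
  obtain ⟨a, b, hab⟩ := hiso x hxne hxf₁ hxf₂
  -- a ≠ i and b ≠ i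
  have hai : a ≠ i := by
    rintro rfl
    rw [hpi₁, hpi₂, zero_mul, mul_zero, sub_zero] at hab
    exact hab rfl
  have hbi : b ≠ i := by
    rintro rfl
    simp [hpi₁, hpi₂] at hab
  have habne : a ≠ b := by
    rintro rfl
    rw [sub_self] at hab
    exact hab rfl
  -- from the nonzero minor, get a nonvanishing product
  have key : (eval x (pderiv a f₁) ≠ 0 ∧ eval x (pderiv b f₂) ≠ 0) ∨
      (eval x (pderiv b f₁) ≠ 0 ∧ eval x (pderiv a f₂) ≠ 0) := by
    by_contra hc
    push_neg at hc
    obtain ⟨hc1, hc2⟩ := hc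
    apply hab
    by_cases h1 : eval x (pderiv a f₁) = 0 <;> by_cases h2 : eval x (pderiv b f₁) = 0
    · rw [h1, h2]; ring
    · rw [h1, hc2 h2]; ring
    · rw [h2, hc1 h1]; ring
    · rw [hc1 h1, hc2 h2]; ring
  -- conclude
  have final : ∀ j k : Fin 5, j ≠ i → k ≠ i → j ≠ k →
      eval x (pderiv j f₁) ≠ 0 → eval x (pderiv k f₂) ≠ 0 →
      (∃ j k : Fin 5, j ≠ i ∧ k ≠ i ∧ j ≠ k ∧
        (∃ n : ℕ, Appears f₁ (Finsupp.single i n + Finsupp.single j 1)) ∧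
        (∃ m : ℕ, Appears f₂ (Finsupp.single i m + Finsupp.single k 1))) := by
    intro j k hji hki hjk h1 h2
    obtain ⟨n, hn⟩ := exists_coeff_ne_zero i _ h1
    obtain ⟨m, hm⟩ := exists_coeff_ne_zero i _ h2
    rw [coeff_pderiv_aux] at hn hm
    refine ⟨j, k, hji, hki, hjk, ⟨n, ?_⟩, ⟨m, ?_⟩⟩
    · exact fun h => hn (by rw [h, mul_zero])
    · exact fun h => hm (by rw [h, mul_zero])
  rcases key with ⟨h1, h2⟩ | ⟨h1, h2⟩
  · exact final a b hai hbi habne h1 h2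
  · exact final b a hbi hai habne.symm h1 h2
end

section
/- (Lemma 5.3, part (2).) Let f_1, f_2 ∈ ℂ[z_1,…,z_5] with f_1(0) = f_2(0) = 0, and suppose the variety X = {x ∈ ℂ^5 : f_1(x) = f_2(x) = 0} has an isolated singularity at the origin. Then for every l ∈ {1,2} and every pair of distinct indices i, j ∈ {1,2,3,4,5}, one of the following holds: (2a) z_i^a z_j^b appears in f_l for some nonnegative integers a, b; (2b) there exists k ∈ {1,2,3,4,5} \ {i,j} such that z_k z_i^a z_j^b appears in f_l for some nonnegative integers a, b. -/
open MvPolynomial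

/-- A two-variable polynomial over ℂ vanishing at the origin has a nonzero zero. -/
lemma twoVar_nonzero_zero (P : Polynomial (Polynomial ℂ))
    (h0 : Polynomial.eval 0 (P.coeff 0) = 0) :
    ∃ u v : ℂ, ¬(u = 0 ∧ v = 0) ∧
      Polynomial.eval₂ (Polynomial.evalRingHom u) v P = 0 := by
  by_cases hdeg : P.natDegree = 0
  · refine ⟨0, 1, by simp, ?_⟩
    rw [Polynomial.eq_C_of_natDegree_eq_zero hdeg]
    simpa using h0
  · have hP : P ≠ 0 := fun h => hdeg (by simp [h])
    set n := P.natDegree with hn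
    have hcn : P.coeff n ≠ 0 := by
      rw [hn, ← Polynomial.leadingCoeff]
      exact Polynomial.leadingCoeff_ne_zero.mpr hP
    have hfin : Set.Finite ({0} ∪ { u : ℂ | (P.coeff n).IsRoot u }) :=
      (Set.finite_singleton 0).union (Polynomial.finite_setOf_isRoot hcn)
    obtain ⟨u₀, hu₀⟩ := hfin.infinite_compl.nonempty
    rw [Set.mem_compl_iff, Set.mem_union] at hu₀
    push_neg at hu₀
    obtain ⟨hu₀0, hu₀r⟩ := hu₀
    have hu₀0 : u₀ ≠ 0 := by simpa using hu₀0
    set Q := P.map (Polynomial.evalRingHom u₀) with hQ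
    have hQn : Q.coeff n ≠ 0 := by
      simpa [hQ, Polynomial.coeff_map] using hu₀r
    have hQdeg : 0 < Q.degree := by
      have h1 : 1 ≤ n := Nat.one_le_iff_ne_zero.mpr hdeg
      have : (n : WithBot ℕ) ≤ Q.degree := Polynomial.le_degree_of_ne_zero hQn
      calc (0 : WithBot ℕ) < (n : ℕ) := by exact_mod_cast h1
        _ ≤ Q.degree := this
    obtain ⟨v₀, hv₀⟩ := Complex.exists_root hQdeg
    refine ⟨u₀, v₀, fun h => hu₀0 h.1, ?_⟩
    rw [Polynomial.eval₂_eq_eval_map]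
    exact hv₀

/-- Evaluation of a monomial is zero if some variable with positive exponent is zero. -/
lemma eval_monomial_zero (x : Fin 5 → ℂ) (m : Fin 5 →₀ ℕ) (c : ℂ) (l : Fin 5)
    (hxl : x l = 0) (hml : m l ≠ 0) : eval x (monomial m c) = 0 := by
  classical
  rw [eval_monomial]
  have hls : l ∈ m.support := Finsupp.mem_support_iff.mpr hml
  have hz : (m.prod fun k e => x k ^ e) = 0 := by
    rw [Finsupp.prod]
    exact Finset.prod_eq_zero hls (by simp [hxl, zero_pow hml])
  rw [hz, mul_zero]

lemma key_lemma (f g : MvPolynomial (Fin 5) ℂ)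
    (hg0 : eval (0 : Fin 5 → ℂ) g = 0) (i j : Fin 5) (hij : i ≠ j)
    (h1 : ∀ a b : ℕ, ¬ Appears f (Finsupp.single i a + Finsupp.single j b))
    (h2 : ∀ k : Fin 5, k ≠ i → k ≠ j → ∀ a b : ℕ,
      ¬ Appears f (Finsupp.single k 1 + Finsupp.single i a + Finsupp.single j b)) :
    ∃ x : Fin 5 → ℂ, x ≠ 0 ∧ eval x f = 0 ∧ eval x g = 0 ∧
      ∀ k, eval x (pderiv k f) = 0 := by
  classical
  -- combinatorial facts about monomials of f
  have step1 : ∀ m ∈ f.support, ∃ l : Fin 5, l ≠ i ∧ l ≠ j ∧ m l ≠ 0 := by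
    intro m hm
    by_contra hno
    push_neg at hno
    have hmeq : m = Finsupp.single i (m i) + Finsupp.single j (m j) := by
      ext l
      rcases eq_or_ne l i with rfl | hli
      · simp [Finsupp.single_apply, hij.symm]
      · rcases eq_or_ne l j with rfl | hlj
        · simp [Finsupp.single_apply, hij]
        · have h0 := hno l hli hlj
          simp [Finsupp.single_apply, (Ne.symm hli : i ≠ l), (Ne.symm hlj : j ≠ l), h0]
    exact h1 (m i) (m j) (by rw [← hmeq]; exact MvPolynomial.mem_support_iff.mp hm)
  have step2 : ∀ m ∈ f.support, ∀ k : Fin 5,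
      ∃ l : Fin 5, l ≠ i ∧ l ≠ j ∧ (m - Finsupp.single k 1 : Fin 5 →₀ ℕ) l ≠ 0 := by
    intro m hm k
    obtain ⟨l₀, hl₀i, hl₀j, hl₀⟩ := step1 m hm
    have hne : m ≠ Finsupp.single l₀ 1 + Finsupp.single i (m i) + Finsupp.single j (m j) := by
      intro heq
      exact h2 l₀ hl₀i hl₀j (m i) (m j)
        (by rw [← heq]; exact MvPolynomial.mem_support_iff.mp hm)
    have hbig : 2 ≤ m l₀ ∨ ∃ l₁ : Fin 5, l₁ ≠ i ∧ l₁ ≠ j ∧ l₁ ≠ l₀ ∧ m l₁ ≠ 0 := by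
      by_contra hcon
      push_neg at hcon
      obtain ⟨hml₀, hrest⟩ := hcon
      apply hne
      ext l
      rcases eq_or_ne l l₀ with rfl | hll₀
      · have : m l = 1 := by omega
        simp [Finsupp.single_apply, this, Ne.symm hl₀i, Ne.symm hl₀j]
      · rcases eq_or_ne l i with rfl | hli
        · simp [Finsupp.single_apply, hij.symm, Ne.symm hll₀, hl₀i]
        · rcases eq_or_ne l j with rfl | hlj
          · simp [Finsupp.single_apply, hij, Ne.symm hll₀, hl₀j]
          · have h0 := hrest l hli hlj hll₀
            simp [Finsupp.single_apply, h0, (Ne.symm hll₀ : l₀ ≠ l),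
              (Ne.symm hli : i ≠ l), (Ne.symm hlj : j ≠ l)]
    rcases hbig with h2l | ⟨l₁, hl₁i, hl₁j, hl₁l₀, hl₁⟩
    · refine ⟨l₀, hl₀i, hl₀j, ?_⟩
      have : (m - Finsupp.single k 1 : Fin 5 →₀ ℕ) l₀ = m l₀ - Finsupp.single k 1 l₀ := by
        simp [Finsupp.tsub_apply]
      rw [this]
      have : Finsupp.single k 1 l₀ ≤ 1 := by
        simp [Finsupp.single_apply]; split <;> omega
      omega
    · rcases eq_or_ne k l₁ with rfl | hkl₁
      · refine ⟨l₀, hl₀i, hl₀j, ?_⟩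
        have : (m - Finsupp.single k 1 : Fin 5 →₀ ℕ) l₀ = m l₀ - Finsupp.single k 1 l₀ := by
          simp [Finsupp.tsub_apply]
        rw [this]
        have : Finsupp.single k 1 l₀ = 0 := by
          simp [Finsupp.single_apply, hl₁l₀]
        omega
      · refine ⟨l₁, hl₁i, hl₁j, ?_⟩
        have : (m - Finsupp.single k 1 : Fin 5 →₀ ℕ) l₁ = m l₁ - Finsupp.single k 1 l₁ := by
          simp [Finsupp.tsub_apply]
        rw [this]
        have : Finsupp.single k 1 l₁ = 0 := by
          simp [Finsupp.single_apply, hkl₁]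
        omega
  -- evaluation of f and its derivatives vanishes on the (i,j)-plane
  have hfvanish : ∀ x : Fin 5 → ℂ, (∀ l, l ≠ i → l ≠ j → x l = 0) →
      eval x f = 0 ∧ ∀ k, eval x (pderiv k f) = 0 := by
    intro x hx
    constructor
    · conv_lhs => rw [f.as_sum]
      rw [map_sum]
      apply Finset.sum_eq_zero
      intro m hm
      obtain ⟨l, hli, hlj, hl⟩ := step1 m hm
      exact eval_monomial_zero x m _ l (hx l hli hlj) hl
    · intro k
      conv_lhs => rw [f.as_sum]
      rw [map_sum, map_sum]
      apply Finset.sum_eq_zero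
      intro m hm
      rw [pderiv_monomial]
      obtain ⟨l, hli, hlj, hl⟩ := step2 m hm k
      exact eval_monomial_zero x _ _ l (hx l hli hlj) hl
  -- construct a nonzero zero of g on the (i,j)-plane
  set σf : Fin 5 → Polynomial (Polynomial ℂ) := fun idx =>
    if idx = i then Polynomial.C Polynomial.X else if idx = j then Polynomial.X else 0
    with hσf
  set xx : ℂ → ℂ → Fin 5 → ℂ := fun u v idx =>
    if idx = i then u else if idx = j then v else 0 with hxx
  have hevalP : ∀ (u v : ℂ) (p : MvPolynomial (Fin 5) ℂ),
      Polynomial.eval₂ (Polynomial.evalRingHom u) v (aeval σf p) = eval (xx u v) p := by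
    intro u v p
    induction p using MvPolynomial.induction_on with
    | C c => simp [MvPolynomial.algebraMap_eq]
    | add p q hp hq => simp [map_add, hp, hq]
    | mul_X p idx hp =>
      rw [map_mul, Polynomial.eval₂_mul, hp, map_mul]
      congr 1
      simp only [aeval_X, eval_X, hσf, hxx]
      rcases eq_or_ne idx i with rfl | hidxi
      · simp
      · rcases eq_or_ne idx j with rfl | hidxj
        · simp [hidxi]
        · simp [hidxi, hidxj]
  have hP0 : Polynomial.eval 0 ((aeval σf g).coeff 0) = 0 := by
    have := hevalP 0 0 g
    rw [Polynomial.eval₂_at_zero] at this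
    simp only [Polynomial.coe_evalRingHom] at this
    rw [this]
    have : xx 0 0 = 0 := by
      funext idx
      simp only [hxx]
      split <;> simp
    rw [this, hg0]
  obtain ⟨u₀, v₀, huv, hzero⟩ := twoVar_nonzero_zero (aeval σf g) hP0
  rw [hevalP] at hzero
  refine ⟨xx u₀ v₀, ?_, ?_, hzero, ?_⟩
  · intro h
    apply huv
    constructor
    · have := congrFun h i
      simpa [hxx] using this
    · have := congrFun h j
      simpa [hxx, Ne.symm hij] using this
  · exact (hfvanish (xx u₀ v₀) (fun l hli hlj => by simp [hxx, hli, hlj])).1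
  · exact (hfvanish (xx u₀ v₀) (fun l hli hlj => by simp [hxx, hli, hlj])).2

/-- Lemma 5.3 (2). -/
theorem icis_monomial_structure_two (f₁ f₂ : MvPolynomial (Fin 5) ℂ)
    (h₀₁ : eval (0 : Fin 5 → ℂ) f₁ = 0) (h₀₂ : eval (0 : Fin 5 → ℂ) f₂ = 0)
    (hiso : IsolatedSingOrigin f₁ f₂) :
    ∀ f ∈ ({f₁, f₂} : Set (MvPolynomial (Fin 5) ℂ)), ∀ i j : Fin 5, i ≠ j →
      (∃ a b : ℕ, Appears f (Finsupp.single i a + Finsupp.single j b)) ∨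
      (∃ k : Fin 5, k ≠ i ∧ k ≠ j ∧
        ∃ a b : ℕ,
          Appears f (Finsupp.single k 1 + Finsupp.single i a + Finsupp.single j b)) := by
  intro f hf i j hij
  by_contra hcon
  push_neg at hcon
  obtain ⟨h1, h2⟩ := hcon
  rcases hf with rfl | hf
  · obtain ⟨x, hx0, hxf, hxg, hxd⟩ := key_lemma f f₂ h₀₂ i j hij h1 h2
    obtain ⟨a, b, hab⟩ := hiso x hx0 hxf hxg
    apply hab
    rw [hxd a, hxd b]
    ring
  · rw [Set.mem_singleton_iff] at hf
    subst hf
    obtain ⟨x, hx0, hxf, hxg, hxd⟩ := key_lemma f f₁ h₀₁ i j hij h1 h2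
    obtain ⟨a, b, hab⟩ := hiso x hx0 hxg hxf
    apply hab
    rw [hxd a, hxd b]
    ring
end

section
/- (Corollary 5.4, part (1).) Let f_1, f_2 ∈ ℂ[z_1,…,z_5] with f_1(0) = f_2(0) = 0, weighted homogeneous of type (w_1,…,w_5; d_1, d_2), and suppose the variety X = {x ∈ ℂ^5 : f_1(x) = f_2(x) = 0} has an isolated singularity at the origin. Then for every i ∈ {1,2,3,4,5}: d_1 ∈ N(w_i), or d_2 ∈ N(w_i), or there exist distinct j, k ∈ {1,2,3,4,5} \ {i} such that d_1 − w_j ∈ N(w_i) and d_2 − w_k ∈ N(w_i). -/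
open MvPolynomial

/-- `f` is weighted homogeneous of weights `w` and degree `d`: every monomial
appearing in `f` has weighted degree `d`. -/
def WeightedHomog (f : MvPolynomial (Fin 5) ℂ) (w : Fin 5 → ℚ) (d : ℚ) : Prop :=
  ∀ m : Fin 5 →₀ ℕ, MvPolynomial.coeff m f ≠ 0 → ∑ i, (m i : ℚ) * w i = d

/-- `N(a) = {k·a : k ∈ ℕ}`. -/
def Nset1 (a : ℚ) : Set ℚ := {x | ∃ k : ℕ, x = k * a}

/-- `N(a,b) = {k·a + s·b : k, s ∈ ℕ}`. -/
def Nset2 (a b : ℚ) : Set ℚ := {x | ∃ k s : ℕ, x = k * a + s * b}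

/-- `N(a,b,c) = {k·a + s·b + t·c : k, s, t ∈ ℕ}`. -/
def Nset3 (a b c : ℚ) : Set ℚ := {x | ∃ k s t : ℕ, x = k * a + s * b + t * c}

lemma my_coeff_pderiv (f : MvPolynomial (Fin 5) ℂ) (j : Fin 5) (m : Fin 5 →₀ ℕ) :
    coeff m (pderiv j f) = ((m j + 1 : ℕ) : ℂ) * coeff (m + Finsupp.single j 1) f := by
  conv_lhs => rw [f.as_sum]
  rw [map_sum, coeff_sum]
  rw [Finset.sum_eq_single (m + Finsupp.single j 1)]
  · rw [pderiv_monomial, add_tsub_cancel_right, coeff_monomial, if_pos rfl]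
    simp [mul_comm]
  · intro s hs hne
    rw [pderiv_monomial, coeff_monomial]
    split_ifs with h
    · rcases Nat.eq_zero_or_pos (s j) with h0 | hpos
      · simp [h0]
      · exfalso
        apply hne
        have hle : Finsupp.single j 1 ≤ s := by
          intro a
          rcases eq_or_ne a j with rfl | hne'
          · simpa using Nat.one_le_iff_ne_zero.mpr hpos.ne'
          · simp [Finsupp.single_apply, hne'.symm]
        rw [← h, tsub_add_cancel_of_le hle]
    · simp
  · intro h
    rw [notMem_support_iff] at h
    simp [h]

lemma exists_mono (g : MvPolynomial (Fin 5) ℂ) (i : Fin 5)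
    (h : eval (Pi.single i 1 : Fin 5 → ℂ) g ≠ 0) :
    ∃ m, coeff m g ≠ 0 ∧ ∀ j, j ≠ i → m j = 0 := by
  by_contra hc
  push_neg at hc
  apply h
  rw [eval_eq']
  apply Finset.sum_eq_zero
  intro m hm
  obtain ⟨j, hj, hmj⟩ := hc m (mem_support_iff.mp hm)
  apply mul_eq_zero_of_right
  refine Finset.prod_eq_zero (Finset.mem_univ j) ?_
  rw [Pi.single_eq_of_ne hj]
  exact zero_pow hmj

lemma sum_single_support (w : Fin 5 → ℚ) (m : Fin 5 →₀ ℕ) (i : Fin 5)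
    (hsupp : ∀ j, j ≠ i → m j = 0) :
    ∑ j, (m j : ℚ) * w j = (m i : ℚ) * w i := by
  rw [Finset.sum_eq_single i]
  · intro b _ hb; simp [hsupp b hb]
  · simp

lemma key (f : MvPolynomial (Fin 5) ℂ) (w : Fin 5 → ℚ) (d : ℚ) (i : Fin 5)
    (hwh : WeightedHomog f w d) (hni : d ∉ Nset1 (w i)) (a : Fin 5)
    (h : eval (Pi.single i 1 : Fin 5 → ℂ) (pderiv a f) ≠ 0) :
    a ≠ i ∧ d - w a ∈ Nset1 (w i) := by
  obtain ⟨m, hm, hsupp⟩ := exists_mono _ i h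
  rw [my_coeff_pderiv] at hm
  have hcf : coeff (m + Finsupp.single a 1) f ≠ 0 := fun h0 => hm (by rw [h0, mul_zero])
  have hdeg := hwh _ hcf
  have hsum : ∑ j, (((m + Finsupp.single a 1) : Fin 5 →₀ ℕ) j : ℚ) * w j
      = (m i : ℚ) * w i + w a := by
    have h1 : ∀ j : Fin 5, (((m + Finsupp.single a 1) : Fin 5 →₀ ℕ) j : ℚ) * w j
        = (m j : ℚ) * w j + (((Finsupp.single a 1 : Fin 5 →₀ ℕ) j : ℚ)) * w j := by
      intro j
      rw [Finsupp.add_apply]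
      push_cast
      ring
    rw [Finset.sum_congr rfl fun j _ => h1 j, Finset.sum_add_distrib,
      sum_single_support w m i hsupp]
    congr 1
    rw [Finset.sum_eq_single a]
    · simp
    · intro b _ hb; simp [Finsupp.single_apply, hb.symm]
    · simp
  rw [hsum] at hdeg
  by_cases hai : a = i
  · exfalso
    apply hni
    exact ⟨m i + 1, by subst hai; push_cast; linarith⟩
  · exact ⟨hai, ⟨m i, by linarith⟩⟩

/-- Corollary 5.4 (1). -/
theorem icis_degree_structure_one (f₁ f₂ : MvPolynomial (Fin 5) ℂ) (w : Fin 5 → ℚ) (d₁ d₂ : ℚ)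
    (hw : ∀ i, 0 < w i) (hd₁ : 0 < d₁) (hd₂ : 0 < d₂)
    (h₀₁ : eval (0 : Fin 5 → ℂ) f₁ = 0) (h₀₂ : eval (0 : Fin 5 → ℂ) f₂ = 0)
    (hwh₁ : WeightedHomog f₁ w d₁) (hwh₂ : WeightedHomog f₂ w d₂)
    (hiso : IsolatedSingOrigin f₁ f₂) :
    ∀ i : Fin 5,
      d₁ ∈ Nset1 (w i) ∨ d₂ ∈ Nset1 (w i) ∨
      (∃ j k : Fin 5, j ≠ i ∧ k ≠ i ∧ j ≠ k ∧
        d₁ - w j ∈ Nset1 (w i) ∧ d₂ - w k ∈ Nset1 (w i)) := by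
  intro i
  by_cases h1 : d₁ ∈ Nset1 (w i)
  · exact Or.inl h1
  by_cases h2 : d₂ ∈ Nset1 (w i)
  · exact Or.inr (Or.inl h2)
  refine Or.inr (Or.inr ?_)
  set x : Fin 5 → ℂ := Pi.single i 1 with hxdef
  have hx : x ≠ 0 := by
    intro h
    have := congrFun h i
    simp [hxdef] at this
  have heval : ∀ (f : MvPolynomial (Fin 5) ℂ) (d : ℚ), WeightedHomog f w d →
      d ∉ Nset1 (w i) → eval x f = 0 := by
    intro f d hwh hni
    by_contra he
    obtain ⟨m, hm, hsupp⟩ := exists_mono f i he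
    exact hni ⟨m i, by rw [← hwh m hm, sum_single_support w m i hsupp]⟩
  obtain ⟨a, b, hmin⟩ := hiso x hx (heval f₁ d₁ hwh₁ h1) (heval f₂ d₂ hwh₂ h2)
  have hab : a ≠ b := by rintro rfl; simp at hmin
  have hcases : eval x (pderiv a f₁) * eval x (pderiv b f₂) ≠ 0 ∨
      eval x (pderiv b f₁) * eval x (pderiv a f₂) ≠ 0 := by
    by_contra h
    push_neg at h
    exact hmin (by rw [h.1, h.2, sub_zero])
  rcases hcases with h | h
  · obtain ⟨ha1, ha2⟩ := mul_ne_zero_iff.mp h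
    obtain ⟨hai, hka⟩ := key f₁ w d₁ i hwh₁ h1 a ha1
    obtain ⟨hbi, hkb⟩ := key f₂ w d₂ i hwh₂ h2 b ha2
    exact ⟨a, b, hai, hbi, hab, hka, hkb⟩
  · obtain ⟨ha1, ha2⟩ := mul_ne_zero_iff.mp h
    obtain ⟨hbi, hkb⟩ := key f₁ w d₁ i hwh₁ h1 b ha1
    obtain ⟨hai, hka⟩ := key f₂ w d₂ i hwh₂ h2 a ha2
    exact ⟨b, a, hbi, hai, hab.symm, hkb, hka⟩
end

section
/- (Corollary 5.4, part (2).) Let f_1, f_2 ∈ ℂ[z_1,…,z_5] with f_1(0) = f_2(0) = 0, weighted homogeneous of type (w_1,…,w_5; d_1, d_2), and suppose the variety X = {x ∈ ℂ^5 : f_1(x) = f_2(x) = 0} has an isolated singularity at the origin. Then for every pair of distinct indices i, j ∈ {1,2,3,4,5} and every l ∈ {1,2}: d_l ∈ N(w_i, w_j), or there exists k ∈ {1,2,3,4,5} \ {i,j} such that d_l − w_k ∈ N(w_i, w_j). -/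
open MvPolynomial

/-- On the coordinate plane of variables `i, j`, any polynomial vanishing at the origin
has a nonzero zero. -/
lemma exists_plane_zero (g : MvPolynomial (Fin 5) ℂ) (h0 : eval (0 : Fin 5 → ℂ) g = 0)
    (i j : Fin 5) (hij : i ≠ j) :
    ∃ x : Fin 5 → ℂ, x ≠ 0 ∧ (∀ t, t ≠ i → t ≠ j → x t = 0) ∧ eval x g = 0 := by
  classical
  set B : Polynomial (Polynomial ℂ) :=
    eval₂ ((Polynomial.C : Polynomial ℂ →+* Polynomial (Polynomial ℂ)).comp Polynomial.C)
      (fun m => if m = i then Polynomial.X else if m = j then Polynomial.C Polynomial.X else 0) g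
    with hB
  set p : ℂ → ℂ → (Fin 5 → ℂ) := fun u v m => if m = i then u else if m = j then v else 0
    with hp
  have hvals : ∀ u v : ℂ, eval (p u v) g = Polynomial.eval₂ (Polynomial.evalRingHom v) u B := by
    intro u v
    have h1 : (Polynomial.eval₂RingHom (Polynomial.evalRingHom v) u).comp
        ((Polynomial.C : Polynomial ℂ →+* Polynomial (Polynomial ℂ)).comp
        Polynomial.C) = RingHom.id ℂ := by
      ext a
      simp
    have h2 : ((Polynomial.eval₂RingHom (Polynomial.evalRingHom v) u) ∘ fun m =>
        if m = i then Polynomial.X else if m = j then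
        Polynomial.C Polynomial.X else 0) = p u v := by
      funext m
      by_cases hmi : m = i
      · simp [hmi, hp]
      · by_cases hmj : m = j <;> simp [Function.comp, hmi, hmj, hij.symm, hp]
    have key : Polynomial.eval₂ (Polynomial.evalRingHom v) u B
        = eval₂ (RingHom.id ℂ) (p u v) g := by
      show (Polynomial.eval₂RingHom (Polynomial.evalRingHom v) u) B = _
      rw [hB, eval₂_comp_left, h1, h2]
    rw [key, eval₂_id]
  have hsupp : ∀ u v, ∀ t, t ≠ i → t ≠ j → p u v t = 0 := by
    intro u v t hti htj; simp [hp, hti, htj]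
  have hpi : ∀ u v, p u v i = u := by intro u v; simp [hp]
  have hpj : ∀ u v, p u v j = v := by intro u v; simp [hp, hij.symm]
  by_cases hB0 : B = 0
  · refine ⟨p 1 0, ?_, hsupp 1 0, ?_⟩
    · intro h; have := congrFun h i; rw [hpi] at this; simp at this
    · rw [hvals, hB0]; simp
  · by_cases hdeg : B.natDegree = 0
    · have hBc : B = Polynomial.C (B.coeff 0) := Polynomial.eq_C_of_natDegree_eq_zero hdeg
      have h00 : (0 : Fin 5 → ℂ) = p 0 0 := by
        funext m; simp only [hp]; split_ifs <;> rfl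
      rw [h00, hvals, hBc] at h0
      simp only [Polynomial.eval₂_C, Polynomial.coe_evalRingHom] at h0
      refine ⟨p 1 0, ?_, hsupp 1 0, ?_⟩
      · intro h; have := congrFun h i; rw [hpi] at this; simp at this
      · rw [hvals, hBc]; simpa using h0
    · -- positive degree case
      have hlc : B.leadingCoeff ≠ 0 := Polynomial.leadingCoeff_ne_zero.mpr hB0
      have hfin : Set.Finite {x : ℂ | Polynomial.IsRoot B.leadingCoeff x} :=
        Polynomial.finite_setOf_isRoot hlc
      obtain ⟨v, hv⟩ := (hfin.union (Set.finite_singleton 0)).infinite_compl.nonempty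
      simp only [Set.mem_compl_iff, Set.mem_union, Set.mem_setOf_eq, Set.mem_singleton_iff,
        not_or] at hv
      obtain ⟨hvroot, hv0⟩ := hv
      set B' := B.map (Polynomial.evalRingHom v) with hB'
      have hdeg' : B'.natDegree = B.natDegree :=
        Polynomial.natDegree_map_of_leadingCoeff_ne_zero _ hvroot
      have hdegpos : 0 < B'.degree := by
        apply Polynomial.natDegree_pos_iff_degree_pos.mp
        omega
      obtain ⟨u, hu⟩ := Complex.exists_root hdegpos
      refine ⟨p u v, ?_, hsupp u v, ?_⟩
      · intro h; have := congrFun h j; rw [hpj] at this; exact hv0 this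
      · rw [hvals, ← Polynomial.eval_map]; exact hu

lemma mem_support_pderiv {f : MvPolynomial (Fin 5) ℂ} {k : Fin 5} {m' : Fin 5 →₀ ℕ}
    (h : m' ∈ (pderiv k f).support) :
    ∃ m ∈ f.support, 1 ≤ m k ∧ m' = m - Finsupp.single k 1 := by
  classical
  have hrw : pderiv k f = ∑ m ∈ f.support,
      monomial (m - Finsupp.single k 1) (coeff m f * (m k : ℂ)) := by
    conv_lhs => rw [f.as_sum]
    rw [map_sum]
    exact Finset.sum_congr rfl fun m _ => pderiv_monomial
  rw [hrw] at h
  obtain ⟨m, hm, hmem⟩ := Finset.mem_biUnion.mp (MvPolynomial.support_sum h)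
  refine ⟨m, hm, ?_, ?_⟩
  · by_contra hk
    have : m k = 0 := by omega
    simp [this] at hmem
  · have := MvPolynomial.support_monomial_subset hmem
    simpa using this

lemma key_vanish (f g : MvPolynomial (Fin 5) ℂ) (w : Fin 5 → ℚ) (d : ℚ)
    (h0g : eval (0 : Fin 5 → ℂ) g = 0) (hwh : WeightedHomog f w d)
    (i j : Fin 5) (hij : i ≠ j)
    (hno1 : d ∉ Nset2 (w i) (w j))
    (hno2 : ∀ k : Fin 5, k ≠ i → k ≠ j → d - w k ∉ Nset2 (w i) (w j))
    (hplane : ∃ x : Fin 5 → ℂ, x ≠ 0 ∧ (∀ t, t ≠ i → t ≠ j → x t = 0) ∧ eval x g = 0) :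
    ∃ x : Fin 5 → ℂ, x ≠ 0 ∧ eval x f = 0 ∧ eval x g = 0 ∧
      ∀ k, eval x (pderiv k f) = 0 := by
  classical
  -- key combinatorial claim
  have claim : ∀ m : Fin 5 →₀ ℕ, coeff m f ≠ 0 →
      (∃ t t' : Fin 5, t ≠ i ∧ t ≠ j ∧ t' ≠ i ∧ t' ≠ j ∧ t ≠ t' ∧ 1 ≤ m t ∧ 1 ≤ m t') ∨
      (∃ t : Fin 5, t ≠ i ∧ t ≠ j ∧ 2 ≤ m t) := by
    intro m hm
    have hsum := hwh m hm
    by_cases hz : ∀ t, t ≠ i → t ≠ j → m t = 0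
    · exfalso
      apply hno1
      refine ⟨m i, m j, ?_⟩
      rw [← hsum]
      rw [← Finset.sum_subset (Finset.subset_univ ({i, j} : Finset (Fin 5)))]
      · rw [Finset.sum_pair hij]
      · intro t _ ht
        simp only [Finset.mem_insert, Finset.mem_singleton, not_or] at ht
        rw [hz t ht.1 ht.2]
        simp
    · push_neg at hz
      obtain ⟨t₀, ht₀i, ht₀j, ht₀⟩ := hz
      by_contra hP
      push_neg at hP
      obtain ⟨hP1, hP2⟩ := hP
      have hm₀ : m t₀ = 1 := by
        have := hP2 t₀ ht₀i ht₀j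
        omega
      have hrest : ∀ t, t ≠ i → t ≠ j → t ≠ t₀ → m t = 0 := by
        intro t hti htj htt
        have := hP1 t₀ t ht₀i ht₀j hti htj (fun h => htt h.symm) (by omega)
        omega
      apply hno2 t₀ ht₀i ht₀j
      refine ⟨m i, m j, ?_⟩
      have hss : ∑ t, (m t : ℚ) * w t
          = ∑ t ∈ insert t₀ ({i, j} : Finset (Fin 5)), (m t : ℚ) * w t := by
        refine (Finset.sum_subset (Finset.subset_univ _) ?_).symm
        intro t _ ht
        simp only [Finset.mem_insert, Finset.mem_singleton, not_or] at ht
        rw [hrest t ht.2.1 ht.2.2 ht.1]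
        simp
      rw [hsum] at hss
      rw [Finset.sum_insert (by simp [ht₀i, ht₀j]), Finset.sum_pair hij, hm₀] at hss
      rw [hss]
      push_cast
      ring
  obtain ⟨x, hx0, hxsupp, hxg⟩ := hplane
  refine ⟨x, hx0, ?_, hxg, ?_⟩
  · rw [MvPolynomial.eval_eq' ]
    apply Finset.sum_eq_zero
    intro m hm
    have hc := claim m (MvPolynomial.mem_support_iff.mp hm)
    have : ∃ t, t ≠ i ∧ t ≠ j ∧ 1 ≤ m t := by
      rcases hc with ⟨t, _, ht1, ht2, _, _, _, ht6, _⟩ | ⟨t, ht1, ht2, ht3⟩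
      · exact ⟨t, ht1, ht2, ht6⟩
      · exact ⟨t, ht1, ht2, by omega⟩
    obtain ⟨t, ht1, ht2, ht3⟩ := this
    apply mul_eq_zero_of_right
    apply Finset.prod_eq_zero (Finset.mem_univ t)
    rw [hxsupp t ht1 ht2]
    exact zero_pow (by omega)
  · intro k
    rw [MvPolynomial.eval_eq' ]
    apply Finset.sum_eq_zero
    intro m' hm'
    obtain ⟨m, hm, hmk, rfl⟩ := mem_support_pderiv hm'
    have hc := claim m (MvPolynomial.mem_support_iff.mp hm)
    have hsingle : ∀ t : Fin 5, Finsupp.single k 1 t ≤ 1 := by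
      intro t
      rw [Finsupp.single_apply]
      split <;> omega
    have hex : ∃ t, t ≠ i ∧ t ≠ j ∧ Finsupp.single k 1 t + 1 ≤ m t := by
      rcases hc with ⟨t, t', ht1, ht2, ht1', ht2', htt, hmt, hmt'⟩ | ⟨t, ht1, ht2, ht3⟩
      · by_cases htk : t = k
        · refine ⟨t', ht1', ht2', ?_⟩
          rw [Finsupp.single_apply]
          have hne : ¬ k = t' := by rw [← htk]; exact htt
          simp only [hne, if_false]
          omega
        · refine ⟨t, ht1, ht2, ?_⟩
          rw [Finsupp.single_apply]
          have hne : ¬ k = t := fun h => htk h.symm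
          simp only [hne, if_false]
          omega
      · refine ⟨t, ht1, ht2, ?_⟩
        have := hsingle t
        omega
    obtain ⟨t, ht1, ht2, ht3⟩ := hex
    apply mul_eq_zero_of_right
    apply Finset.prod_eq_zero (Finset.mem_univ t)
    rw [hxsupp t ht1 ht2]
    refine zero_pow ?_
    rw [Finsupp.tsub_apply, Finsupp.single_apply]
    rw [Finsupp.single_apply] at ht3
    split at ht3 <;> simp_all <;> omega


/-- Corollary 5.4 (2). -/
theorem icis_degree_structure_two (f₁ f₂ : MvPolynomial (Fin 5) ℂ) (w : Fin 5 → ℚ) (d₁ d₂ : ℚ)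
    (hw : ∀ i, 0 < w i) (hd₁ : 0 < d₁) (hd₂ : 0 < d₂)
    (h₀₁ : eval (0 : Fin 5 → ℂ) f₁ = 0) (h₀₂ : eval (0 : Fin 5 → ℂ) f₂ = 0)
    (hwh₁ : WeightedHomog f₁ w d₁) (hwh₂ : WeightedHomog f₂ w d₂)
    (hiso : IsolatedSingOrigin f₁ f₂) :
    ∀ i j : Fin 5, i ≠ j → ∀ d ∈ ({d₁, d₂} : Set ℚ),
      d ∈ Nset2 (w i) (w j) ∨
      (∃ k : Fin 5, k ≠ i ∧ k ≠ j ∧ d - w k ∈ Nset2 (w i) (w j)) := by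
  intro i j hij d hd
  by_contra hcon
  push_neg at hcon
  obtain ⟨hno1, hno2⟩ := hcon
  obtain rfl | rfl := hd
  · obtain ⟨x, hx0, hf, hg, hpd⟩ := key_vanish f₁ f₂ w d h₀₂ hwh₁ i j hij hno1 hno2
      (exists_plane_zero f₂ h₀₂ i j hij)
    obtain ⟨a, b, hab⟩ := hiso x hx0 hf hg
    exact hab (by rw [hpd a, hpd b]; ring)
  · obtain ⟨x, hx0, hf, hg, hpd⟩ := key_vanish f₂ f₁ w d h₀₁ hwh₂ i j hij hno1 hno2
      (exists_plane_zero f₁ h₀₁ i j hij)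
    obtain ⟨a, b, hab⟩ := hiso x hx0 hg hf
    exact hab (by rw [hpd a, hpd b]; ring)
end

section
/- (Family (1) of the classification list has an isolated singularity at the origin.) Fix an integer n ≥ 2 and let f_1 = z_1^2 + z_2^2 + z_3^2 + z_4^2 + z_5^n and f_2 = z_1^2 + 2 z_2^2 + 3 z_3^2 + 4 z_4^2 + 5 z_5^n in ℂ[z_1,…,z_5]. Then for every x ∈ ℂ^5 such that f_1(x) = 0, f_2(x) = 0, and all 2×2 minors of the Jacobian matrix ((∂f_l/∂z_i)(x))_{l=1,2; i=1,…,5} vanish at x, one has x = 0. -/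
open MvPolynomial

/-- family (1) of the classification list has an isolated
singularity at the origin. -/
theorem family_one_isolated_singularity (n : ℕ) (hn : 2 ≤ n)
    (f₁ f₂ : MvPolynomial (Fin 5) ℂ)
    (hf₁ : f₁ = X 0 ^ 2 + X 1 ^ 2 + X 2 ^ 2 + X 3 ^ 2 + X 4 ^ n)
    (hf₂ : f₂ = X 0 ^ 2 + C 2 * X 1 ^ 2 + C 3 * X 2 ^ 2 + C 4 * X 3 ^ 2 + C 5 * X 4 ^ n)
    (x : Fin 5 → ℂ) (hx₁ : eval x f₁ = 0) (hx₂ : eval x f₂ = 0)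
    (hmin : ∀ i j : Fin 5,
      eval x (pderiv i f₁) * eval x (pderiv j f₂) -
        eval x (pderiv j f₁) * eval x (pderiv i f₂) = 0) :
    x = 0 := by
  have hnC : (n : ℂ) ≠ 0 := Nat.cast_ne_zero.mpr (by omega)
  -- derivative evaluations
  have d10 : eval x (pderiv (0 : Fin 5) f₁) = 2 * x 0 := by subst hf₁; simp [pderiv_pow]
  have d11 : eval x (pderiv (1 : Fin 5) f₁) = 2 * x 1 := by subst hf₁; simp [pderiv_pow]
  have d12 : eval x (pderiv (2 : Fin 5) f₁) = 2 * x 2 := by subst hf₁; simp [pderiv_pow]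
  have d13 : eval x (pderiv (3 : Fin 5) f₁) = 2 * x 3 := by subst hf₁; simp [pderiv_pow]
  have d14 : eval x (pderiv (4 : Fin 5) f₁) = n * x 4 ^ (n - 1) := by
    subst hf₁; simp [pderiv_pow]
  have d20 : eval x (pderiv (0 : Fin 5) f₂) = 2 * x 0 := by subst hf₂; simp [pderiv_pow]
  have d21 : eval x (pderiv (1 : Fin 5) f₂) = 4 * x 1 := by subst hf₂; simp [pderiv_pow]; ring
  have d22 : eval x (pderiv (2 : Fin 5) f₂) = 6 * x 2 := by subst hf₂; simp [pderiv_pow]; ring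
  have d23 : eval x (pderiv (3 : Fin 5) f₂) = 8 * x 3 := by subst hf₂; simp [pderiv_pow]; ring
  have d24 : eval x (pderiv (4 : Fin 5) f₂) = 5 * n * x 4 ^ (n - 1) := by
    subst hf₂; simp [pderiv_pow]; ring
  subst hf₁ hf₂
  simp only [map_add, map_mul, map_pow, eval_X, eval_C] at hx₁ hx₂
  -- minor relations among the first four coordinates
  have m01 : x 0 * x 1 = 0 := by
    have h := hmin 0 1; rw [d10, d11, d20, d21] at h; linear_combination h / 4
  have m02 : x 0 * x 2 = 0 := by
    have h := hmin 0 2; rw [d10, d12, d20, d22] at h; linear_combination h / 8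
  have m03 : x 0 * x 3 = 0 := by
    have h := hmin 0 3; rw [d10, d13, d20, d23] at h; linear_combination h / 12
  have m12 : x 1 * x 2 = 0 := by
    have h := hmin 1 2; rw [d11, d12, d21, d22] at h; linear_combination h / 4
  have m13 : x 1 * x 3 = 0 := by
    have h := hmin 1 3; rw [d11, d13, d21, d23] at h; linear_combination h / 8
  have m23 : x 2 * x 3 = 0 := by
    have h := hmin 2 3; rw [d12, d13, d22, d23] at h; linear_combination h / 4
  -- minors with the fifth coordinate
  have m04 : x 0 * x 4 ^ (n - 1) = 0 := by
    have h := hmin 0 4; rw [d10, d14, d20, d24] at h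
    have h' : (8 : ℂ) * n * (x 0 * x 4 ^ (n - 1)) = 0 := by linear_combination h
    rcases mul_eq_zero.mp h' with h'' | h''
    · exact absurd h'' (by simp [hnC])
    · exact h''
  have m14 : x 1 * x 4 ^ (n - 1) = 0 := by
    have h := hmin 1 4; rw [d11, d14, d21, d24] at h
    have h' : (6 : ℂ) * n * (x 1 * x 4 ^ (n - 1)) = 0 := by linear_combination h
    rcases mul_eq_zero.mp h' with h'' | h''
    · exact absurd h'' (by simp [hnC])
    · exact h''
  have m24 : x 2 * x 4 ^ (n - 1) = 0 := by
    have h := hmin 2 4; rw [d12, d14, d22, d24] at h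
    have h' : (4 : ℂ) * n * (x 2 * x 4 ^ (n - 1)) = 0 := by linear_combination h
    rcases mul_eq_zero.mp h' with h'' | h''
    · exact absurd h'' (by simp [hnC])
    · exact h''
  have m34 : x 3 * x 4 ^ (n - 1) = 0 := by
    have h := hmin 3 4; rw [d13, d14, d23, d24] at h
    have h' : (2 : ℂ) * n * (x 3 * x 4 ^ (n - 1)) = 0 := by linear_combination h
    rcases mul_eq_zero.mp h' with h'' | h''
    · exact absurd h'' (by simp [hnC])
    · exact h''
  -- x 4 = 0
  have h4 : x 4 = 0 := by
    by_contra h4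
    have hw : x 4 ^ (n - 1) ≠ 0 := pow_ne_zero _ h4
    have h0 : x 0 = 0 := by rcases mul_eq_zero.mp m04 with h | h; exact h; exact absurd h hw
    have h1 : x 1 = 0 := by rcases mul_eq_zero.mp m14 with h | h; exact h; exact absurd h hw
    have h2 : x 2 = 0 := by rcases mul_eq_zero.mp m24 with h | h; exact h; exact absurd h hw
    have h3 : x 3 = 0 := by rcases mul_eq_zero.mp m34 with h | h; exact h; exact absurd h hw
    rw [h0, h1, h2, h3] at hx₁
    exact h4 (pow_eq_zero_iff (show n ≠ 0 by omega) |>.mp (by linear_combination hx₁))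
  have h4n : x 4 ^ n = 0 := by rw [h4]; exact zero_pow (by omega)
  rw [h4n] at hx₁ hx₂
  -- now a² + b² + c² + d² = 0 with pairwise products zero
  have h0 : x 0 = 0 := by
    by_contra h
    have h1 : x 1 = 0 := by rcases mul_eq_zero.mp m01 with h' | h'; exact absurd h' h; exact h'
    have h2 : x 2 = 0 := by rcases mul_eq_zero.mp m02 with h' | h'; exact absurd h' h; exact h'
    have h3 : x 3 = 0 := by rcases mul_eq_zero.mp m03 with h' | h'; exact absurd h' h; exact h'
    rw [h1, h2, h3] at hx₁
    exact h (pow_eq_zero_iff two_ne_zero |>.mp (by linear_combination hx₁))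
  have h1 : x 1 = 0 := by
    by_contra h
    have h2 : x 2 = 0 := by rcases mul_eq_zero.mp m12 with h' | h'; exact absurd h' h; exact h'
    have h3 : x 3 = 0 := by rcases mul_eq_zero.mp m13 with h' | h'; exact absurd h' h; exact h'
    rw [h0, h2, h3] at hx₁
    exact h (pow_eq_zero_iff two_ne_zero |>.mp (by linear_combination hx₁))
  have h2 : x 2 = 0 := by
    by_contra h
    have h3 : x 3 = 0 := by rcases mul_eq_zero.mp m23 with h' | h'; exact absurd h' h; exact h'
    rw [h0, h1, h3] at hx₁
    exact h (pow_eq_zero_iff two_ne_zero |>.mp (by linear_combination hx₁))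
  have h3 : x 3 = 0 := by
    rw [h0, h1, h2] at hx₁
    exact pow_eq_zero_iff two_ne_zero |>.mp (by linear_combination hx₁)
  funext i
  fin_cases i <;> simp [h0, h1, h2, h3, h4]
end

section
/- (Family (7) of the classification list has an isolated singularity at the origin.) Fix an integer n ≥ 3 and let f_1 = z_1 z_3 + z_4 z_5 and f_2 = z_1^2 + z_2^2 + z_3^n + z_4^2 + 2 z_5^n in ℂ[z_1,…,z_5]. Then for every x ∈ ℂ^5 such that f_1(x) = 0, f_2(x) = 0, and all 2×2 minors of the Jacobian matrix ((∂f_l/∂z_i)(x))_{l=1,2; i=1,…,5} vanish at x, one has x = 0. -/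
open MvPolynomial

/-- family (7) of the classification list has an isolated
singularity at the origin. -/
theorem family_seven_isolated_singularity (n : ℕ) (hn : 3 ≤ n)
    (f₁ f₂ : MvPolynomial (Fin 5) ℂ)
    (hf₁ : f₁ = X 0 * X 2 + X 3 * X 4)
    (hf₂ : f₂ = X 0 ^ 2 + X 1 ^ 2 + X 2 ^ n + X 3 ^ 2 + C 2 * X 4 ^ n)
    (x : Fin 5 → ℂ) (hx₁ : eval x f₁ = 0) (hx₂ : eval x f₂ = 0)
    (hmin : ∀ i j : Fin 5,
      eval x (pderiv i f₁) * eval x (pderiv j f₂) -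
        eval x (pderiv j f₁) * eval x (pderiv i f₂) = 0) :
    x = 0 := by
  subst hf₁ hf₂
  have m01 := hmin 0 1
  have m02 := hmin 0 2
  have m03 := hmin 0 3
  have m34 := hmin 3 4
  simp [pderiv_X, pderiv_pow, Pi.single_apply] at m01 m02 m03 m34 hx₁ hx₂
  set a := x 0 with ha'
  set b := x 1 with hb'
  set c := x 2 with hc'
  set d := x 3 with hd'
  set e := x 4 with he'
  have hn0 : n ≠ 0 := by omega
  have hn1 : n - 1 + 1 = n := by omega
  have hcpow : c * c ^ (n-1) = c ^ n := by conv_rhs => rw [← hn1, pow_succ']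
  have hepow : e * e ^ (n-1) = e ^ n := by conv_rhs => rw [← hn1, pow_succ']
  have hnz : (n : ℂ) ≠ 0 := Nat.cast_ne_zero.mpr hn0
  have E02 : (n:ℂ) * c ^ n = 2 * a ^ 2 := by
    linear_combination m02 - (n:ℂ) * hcpow
  have E34 : (n:ℂ) * e ^ n = d ^ 2 := by
    linear_combination m34 / 2 - (n:ℂ) * hepow
  by_cases ha : a = 0
  · -- easy case: everything vanishes
    have hcn : (n:ℂ) * c ^ n = 0 := by rw [E02, ha]; ring
    have hc0 : c = 0 :=
      pow_eq_zero_iff hn0 |>.mp ((mul_eq_zero.mp hcn).resolve_left hnz)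
    have hde : d * e = 0 := by linear_combination hx₁ - c * ha
    have hd0 : d = 0 := by
      rcases mul_eq_zero.mp hde with h | h
      · exact h
      · have : d ^ 2 = 0 := by rw [← E34, h, zero_pow hn0]; ring
        exact pow_eq_zero_iff two_ne_zero |>.mp this
    have he0 : e = 0 := by
      have : (n:ℂ) * e ^ n = 0 := by rw [E34, hd0]; ring
      exact pow_eq_zero_iff hn0 |>.mp ((mul_eq_zero.mp this).resolve_left hnz)
    have hb0 : b = 0 := by
      have h2 : b ^ 2 = 0 := by
        have := hx₂
        rw [ha, hc0, hd0, he0, zero_pow hn0] at this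
        linear_combination this
      exact pow_eq_zero_iff two_ne_zero |>.mp h2
    funext i
    fin_cases i <;> simp [← ha', ← hb', ← hc', ← hd', ← he', ha, hb0, hc0, hd0, he0]
  · exfalso
    have hc : c ≠ 0 := by
      intro h
      apply ha
      have h2 : a ^ 2 = 0 := by
        have := E02; rw [h, zero_pow hn0] at this
        linear_combination -this / 2
      exact pow_eq_zero_iff two_ne_zero |>.mp h2
    have hb0 : b = 0 := m01.resolve_left hc
    have hd : d ≠ 0 := by
      intro hd0
      have he0 : e = 0 := by
        have : (n:ℂ) * e ^ n = 0 := by rw [E34, hd0]; ring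
        exact pow_eq_zero_iff hn0 |>.mp ((mul_eq_zero.mp this).resolve_left hnz)
      have : a * c = 0 := by linear_combination hx₁ - d * he0
      exact (mul_ne_zero ha hc) this
    have he : e ≠ 0 := by
      intro he0
      have : d ^ 2 = 0 := by rw [← E34, he0, zero_pow hn0]; ring
      exact hd (pow_eq_zero_iff two_ne_zero |>.mp this)
    -- cd = ae
    have h1 : c * d = a * e := by linear_combination m03 / 2
    -- c^2 = -e^2
    have hce : c ^ 2 = -e ^ 2 := by
      have h2 : d * (c ^ 2 + e ^ 2) = 0 := by linear_combination c * h1 + e * hx₁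
      have := (mul_eq_zero.mp h2).resolve_left hd
      linear_combination this
    -- a^2 = -d^2
    have had : a ^ 2 = -d ^ 2 := by
      have h2 : e ^ 2 * (a ^ 2 + d ^ 2) = 0 := by
        linear_combination d ^ 2 * hce - (a * e + c * d) * h1
      have := (mul_eq_zero.mp h2).resolve_left (pow_ne_zero 2 he)
      linear_combination this
    have hf2' : c ^ n + 2 * e ^ n = 0 := by
      linear_combination hx₂ - had - b * hb0
    have h3 : c ^ (n * 2) = (-1) ^ n * e ^ (n * 2) := by
      rw [mul_comm n 2, pow_mul, pow_mul, hce, neg_pow]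
    have h4 : (c ^ n) ^ 2 = 4 * (e ^ n) ^ 2 := by
      linear_combination (c ^ n - 2 * e ^ n) * hf2'
    have h5 : ((-1 : ℂ) ^ n - 4) * (e ^ n) ^ 2 = 0 := by
      linear_combination h4 - h3
    have h6 : ((-1 : ℂ)) ^ n = 4 := by
      have := (mul_eq_zero.mp h5).resolve_right
        (pow_ne_zero 2 (pow_ne_zero n he))
      linear_combination this
    rcases Nat.even_or_odd n with hev | hod
    · rw [hev.neg_one_pow] at h6; norm_num at h6
    · rw [hod.neg_one_pow] at h6; norm_num at h6
end

section
/- (Family (113) of the classification list has an isolated singularity at the origin.) Fix integers n_2 ≥ 3 and n_5 with 2 ≤ n_5 ≤ n_2, and let f_1 = z_1 z_2 + z_4 z_5 and f_2 = z_1 z_4 + z_3^2 + z_2^{n_2} + z_5^{n_5} in ℂ[z_1,…,z_5]. Then for every x ∈ ℂ^5 such that f_1(x) = 0, f_2(x) = 0, and all 2×2 minors of the Jacobian matrix ((∂f_l/∂z_i)(x))_{l=1,2; i=1,…,5} vanish at x, one has x = 0. -/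
open MvPolynomial

/-- family (113) of the classification list has an isolated
singularity at the origin. -/
theorem family_113_isolated_singularity (n₂ n₅ : ℕ) (hn₂ : 3 ≤ n₂)
    (hn₅ : 2 ≤ n₅) (hle : n₅ ≤ n₂)
    (f₁ f₂ : MvPolynomial (Fin 5) ℂ)
    (hf₁ : f₁ = X 0 * X 1 + X 3 * X 4)
    (hf₂ : f₂ = X 0 * X 3 + X 2 ^ 2 + X 1 ^ n₂ + X 4 ^ n₅)
    (x : Fin 5 → ℂ) (hx₁ : eval x f₁ = 0) (hx₂ : eval x f₂ = 0)
    (hmin : ∀ i j : Fin 5,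
      eval x (pderiv i f₁) * eval x (pderiv j f₂) -
        eval x (pderiv j f₁) * eval x (pderiv i f₂) = 0) :
    x = 0 := by
  subst hf₁ hf₂
  obtain ⟨m, hm, rfl⟩ : ∃ m, 2 ≤ m ∧ n₂ = m + 1 := ⟨n₂ - 1, by omega, by omega⟩
  obtain ⟨k, hk, rfl⟩ : ∃ k, 1 ≤ k ∧ n₅ = k + 1 := ⟨n₅ - 1, by omega, by omega⟩
  have h03 := hmin 0 3
  have h01 := hmin 0 1
  have h34 := hmin 3 4
  have h04 := hmin 0 4
  have h13 := hmin 1 3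
  simp [pderiv_mul, pderiv_pow, pderiv_X, Pi.single_apply, Nat.add_sub_cancel]
    at hx₁ hx₂ h03 h01 h34 h04 h13
  -- from f₁ = 0 and the (0,3)-minor: x0*x1 = 0
  have hab : x 0 * x 1 = 0 := by linear_combination hx₁ / 2 + h03 / 2
  -- x 1 = 0 in every case
  have hb : x 1 = 0 := by
    rcases mul_eq_zero.mp hab with ha | hb
    · have h : ((m : ℂ) + 1) * x 1 ^ (m + 1) = 0 := by
        linear_combination h01 + x 3 * ha
      rcases mul_eq_zero.mp h with h' | h'
      · exact absurd h' (Nat.cast_add_one_ne_zero m)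
      · exact pow_eq_zero_iff (by omega) |>.mp h'
    · exact hb
  have hbm : x 1 ^ m = 0 := by rw [hb]; exact zero_pow (by omega)
  -- x 3 = 0 from the (0,4)-minor
  have hd : x 3 = 0 := by
    have h : x 3 * x 3 = 0 := by
      linear_combination -h04 + (((k : ℂ) + 1) * x 4 ^ k) * hb
    exact mul_self_eq_zero.mp h
  -- x 0 = 0 from the (1,3)-minor
  have ha : x 0 = 0 := by
    have h : x 0 * x 0 = 0 := by
      linear_combination h13 + (x 4 * ((m : ℂ) + 1)) * hbm
    exact mul_self_eq_zero.mp h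
  -- x 4 = 0 from the (3,4)-minor
  have he : x 4 = 0 := by
    have h : ((k : ℂ) + 1) * x 4 ^ (k + 1) = 0 := by
      linear_combination h34 + x 3 * ha
    rcases mul_eq_zero.mp h with h' | h'
    · exact absurd h' (Nat.cast_add_one_ne_zero k)
    · exact pow_eq_zero_iff (by omega) |>.mp h'
  -- x 2 = 0 from f₂ = 0
  have hc : x 2 = 0 := by
    have h : x 2 ^ 2 = 0 := by
      linear_combination hx₂ - x 3 * ha - x 1 ^ m * hb - x 4 ^ k * he
    exact pow_eq_zero_iff (by omega) |>.mp h
  funext i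
  fin_cases i <;> simp [ha, hb, hc, hd, he]
end
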